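/- Define statistics on S_n: S₁(π) = number of non-inversions (i,j), i<j, π(i)<π(j), such that no entry between positions i and j exceeds π(j) [occurrences of mesh pattern (12,{(1,2)})]; S₂ analogously for inversions; T₁(π) = occurrences of the mesh pattern (132, {(1,3),(2,3)}); T₂(π) = occurrences of (231, {(1,3),(2,3)}). Let F_n = ∑_{π∈S_n} p₁^{S₁(π)} p₂^{S₂(π)} q₁^{T₁(π)} q₂^{T₂(π)}. Then F_{n+1} = ∑_{k=0}^{n} qbin(n, k; q₁, q₂) · p₁^k p₂^{n-k} · F_k · F_{n-k}, where qbin(n,k;q₁,q₂) is the (q₁,q₂)-binomial coefficient [n]!/([k]![n-k]!) with [m] = q₁^{m-1} + q₁^{m-2}q₂ + ⋯ + q₂^{m-1}. -/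

import Mathlib

open Finset

variable {F : Type*} [Field F]

/-- The `(q₁,q₂)`-integer `[m] = q₁^{m-1} + q₁^{m-2}q₂ + ⋯ + q₂^{m-1}`. -/
def qint (q₁ q₂ : F) (m : ℕ) : F := ∑ a ∈ range m, q₁ ^ a * q₂ ^ (m - 1 - a)

/-- The `(q₁,q₂)`-factorial `[m]! = [1][2]⋯[m]`. -/
def qfac (q₁ q₂ : F) (m : ℕ) : F := ∏ i ∈ range m, qint q₁ q₂ (i + 1)

/-- The `(q₁,q₂)`-binomial coefficient `[n]!/([k]![n-k]!)`. -/
def qbin (q₁ q₂ : F) (n k : ℕ) : F := qfac q₁ q₂ n / (qfac q₁ q₂ k * qfac q₁ q₂ (n - k))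

/-- `S₁(π)`: non-inversions `(i,j)` (`i < j`, `π(i) < π(j)`) such that no entry
strictly between positions `i` and `j` exceeds `π(j)` — mesh pattern `(12,{(1,2)})`. -/
def S1 {n : ℕ} (π : Equiv.Perm (Fin n)) : ℕ :=
  (univ.filter fun p : Fin n × Fin n =>
    p.1 < p.2 ∧ π p.1 < π p.2 ∧
    ∀ a : Fin n, p.1 < a → a < p.2 → ¬ (π p.2 < π a)).card

/-- `S₂(π)`: inversions `(i,j)` (`i < j`, `π(i) > π(j)`) such that no entry strictly
between positions `i` and `j` exceeds `π(i)` — mesh pattern `(21,{(1,2)})`. -/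
def S2 {n : ℕ} (π : Equiv.Perm (Fin n)) : ℕ :=
  (univ.filter fun p : Fin n × Fin n =>
    p.1 < p.2 ∧ π p.2 < π p.1 ∧
    ∀ a : Fin n, p.1 < a → a < p.2 → ¬ (π p.1 < π a)).card

/-- `T₁(π)`: occurrences of the mesh pattern `(132, {(1,3),(2,3)})`: triples
`i < j < k` with `π(i) < π(k) < π(j)` and no entry strictly between positions `i`
and `k` exceeding `π(j)`. -/
def T1 {n : ℕ} (π : Equiv.Perm (Fin n)) : ℕ :=
  (univ.filter fun t : Fin n × Fin n × Fin n =>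
    t.1 < t.2.1 ∧ t.2.1 < t.2.2 ∧ π t.1 < π t.2.2 ∧ π t.2.2 < π t.2.1 ∧
    ∀ a : Fin n, t.1 < a → a < t.2.2 → ¬ (π t.2.1 < π a)).card

/-- `T₂(π)`: occurrences of the mesh pattern `(231, {(1,3),(2,3)})`: triples
`i < j < k` with `π(k) < π(i) < π(j)` and no entry strictly between positions `i`
and `k` exceeding `π(j)`. -/
def T2 {n : ℕ} (π : Equiv.Perm (Fin n)) : ℕ :=
  (univ.filter fun t : Fin n × Fin n × Fin n =>
    t.1 < t.2.1 ∧ t.2.1 < t.2.2 ∧ π t.2.2 < π t.1 ∧ π t.1 < π t.2.1 ∧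
    ∀ a : Fin n, t.1 < a → a < t.2.2 → ¬ (π t.2.1 < π a)).card

/-- `F_n = ∑_{π ∈ S_n} p₁^{S₁(π)} p₂^{S₂(π)} q₁^{T₁(π)} q₂^{T₂(π)}`. -/
def Fgen (p₁ p₂ q₁ q₂ : F) (n : ℕ) : F :=
  ∑ π : Equiv.Perm (Fin n), p₁ ^ S1 π * p₂ ^ S2 π * q₁ ^ T1 π * q₂ ^ T2 π


section Part1

lemma qint_add (q₁ q₂ : F) (a b : ℕ) :
    qint q₁ q₂ (a + b) = q₂ ^ b * qint q₁ q₂ a + q₁ ^ a * qint q₁ q₂ b := by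
  unfold qint
  rw [Finset.sum_range_add, Finset.mul_sum, Finset.mul_sum]
  congr 1
  · refine Finset.sum_congr rfl fun i hi => ?_
    rw [Finset.mem_range] at hi
    have h1 : a + b - 1 - i = b + (a - 1 - i) := by omega
    rw [h1, pow_add]; ring
  · refine Finset.sum_congr rfl fun i hi => ?_
    rw [Finset.mem_range] at hi
    have h1 : a + b - 1 - (a + i) = b - 1 - i := by omega
    rw [h1, pow_add]; ring

lemma qfac_succ (q₁ q₂ : F) (m : ℕ) :
    qfac q₁ q₂ (m + 1) = qfac q₁ q₂ m * qint q₁ q₂ (m + 1) :=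
  Finset.prod_range_succ _ _

lemma qfac_ne_zero {q₁ q₂ : F} (hq : ∀ m : ℕ, 1 ≤ m → qint q₁ q₂ m ≠ 0) (m : ℕ) :
    qfac q₁ q₂ m ≠ 0 :=
  Finset.prod_ne_zero_iff.mpr fun i _ => hq (i + 1) (Nat.le_add_left _ _)

@[simp] lemma qfac_zero (q₁ q₂ : F) : qfac q₁ q₂ 0 = 1 := rfl

lemma qbin_zero (q₁ q₂ : F) (hq : ∀ m : ℕ, 1 ≤ m → qint q₁ q₂ m ≠ 0) (n : ℕ) :
    qbin q₁ q₂ n 0 = 1 := by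
  unfold qbin
  rw [qfac_zero, one_mul, Nat.sub_zero, div_self (qfac_ne_zero hq n)]

lemma qbin_self (q₁ q₂ : F) (hq : ∀ m : ℕ, 1 ≤ m → qint q₁ q₂ m ≠ 0) (n : ℕ) :
    qbin q₁ q₂ n n = 1 := by
  unfold qbin
  rw [Nat.sub_self, qfac_zero, mul_one, div_self (qfac_ne_zero hq n)]

lemma qbin_rec (q₁ q₂ : F) (hq : ∀ m : ℕ, 1 ≤ m → qint q₁ q₂ m ≠ 0) {n k : ℕ}
    (hk1 : 1 ≤ k) (hkn : k ≤ n) :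
    qbin q₁ q₂ (n + 1) k =
      q₂ ^ (n + 1 - k) * qbin q₁ q₂ n (k - 1) + q₁ ^ k * qbin q₁ q₂ n k := by
  have hsplit : qint q₁ q₂ (n + 1) =
      q₂ ^ (n + 1 - k) * qint q₁ q₂ k + q₁ ^ k * qint q₁ q₂ (n + 1 - k) := by
    have h : n + 1 = k + (n + 1 - k) := by omega
    conv_lhs => rw [h, qint_add]
  have hk : k = (k - 1) + 1 := by omega
  have hnk : n + 1 - k = (n - k) + 1 := by omega
  have e1 : qfac q₁ q₂ (n + 1) = qfac q₁ q₂ n * qint q₁ q₂ (n + 1) := qfac_succ _ _ _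
  have e2 : qfac q₁ q₂ k = qfac q₁ q₂ (k - 1) * qint q₁ q₂ k := by
    conv_lhs => rw [hk]
    rw [qfac_succ, ← hk]
  have e3 : qfac q₁ q₂ (n + 1 - k) = qfac q₁ q₂ (n - k) * qint q₁ q₂ (n + 1 - k) := by
    conv_lhs => rw [hnk]
    rw [qfac_succ, ← hnk]
  have h1 : n + 1 - k ≥ 1 := by omega
  have hn1 : n - (k - 1) = n + 1 - k := by omega
  unfold qbin
  rw [hn1, e1, e2, e3, hsplit]
  have f1 := qfac_ne_zero hq (k - 1)
  have f2 := qfac_ne_zero hq (n - k)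
  have f3 := hq k hk1
  have f4 := hq (n + 1 - k) h1
  field_simp

end Part1

section Gauss

variable {α : Type*} [DecidableEq α] [LinearOrder α]

/-- γ(A) relative to ground set s : pairs (x,y), x ∈ A, y ∈ s \ A, y < x. -/
def gamA (s A : Finset α) : ℕ := ((A ×ˢ (s \ A)).filter fun p => p.2 < p.1).card

/-- pairs (x,y), x ∈ A, y ∈ s \ A, x < y. -/
def gamB (s A : Finset α) : ℕ := ((A ×ˢ (s \ A)).filter fun p => p.1 < p.2).card

def Gsum (q₁ q₂ : F) (s : Finset α) (k : ℕ) : F :=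
  ∑ A ∈ powersetCard k s, q₁ ^ gamB s A * q₂ ^ gamA s A

lemma card_filter_product {β γ : Type*} (s : Finset β) (t : Finset γ)
    (p : β × γ → Prop) [DecidablePred p] :
    ((s ×ˢ t).filter p).card = ∑ x ∈ s, (t.filter fun y => p (x, y)).card := by
  rw [Finset.card_filter, Finset.sum_product]
  exact Finset.sum_congr rfl fun x _ => (Finset.card_filter _ _).symm

variable {s A : Finset α} {M : α}

lemma sdiff_erase_max (hM : M ∈ s) (hA : A ⊆ s.erase M) :
    s \ A = insert M (s.erase M \ A) := by
  ext x
  simp only [mem_sdiff, mem_insert, mem_erase]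
  constructor
  · rintro ⟨hxs, hxA⟩
    by_cases hxM : x = M
    · exact Or.inl hxM
    · exact Or.inr ⟨⟨hxM, hxs⟩, hxA⟩
  · rintro (rfl | ⟨⟨hxM, hxs⟩, hxA⟩)
    · exact ⟨hM, fun h => (mem_erase.mp (hA h)).1 rfl⟩
    · exact ⟨hxs, hxA⟩

lemma M_not_mem_diff (hA : A ⊆ s.erase M) : M ∉ s.erase M \ A := fun h =>
  (mem_erase.mp (mem_sdiff.mp h).1).1 rfl

lemma gamA_erase (hM : M ∈ s) (hmax : ∀ x ∈ s, x ≤ M) (hA : A ⊆ s.erase M) :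
    gamA s A = gamA (s.erase M) A := by
  unfold gamA
  rw [sdiff_erase_max hM hA, card_filter_product, card_filter_product]
  refine Finset.sum_congr rfl fun x hx => ?_
  rw [filter_insert, if_neg]
  have hxs := mem_erase.mp (hA hx)
  exact fun h => hxs.1 (le_antisymm (hmax x hxs.2) h.le)

lemma gamB_erase (hM : M ∈ s) (hmax : ∀ x ∈ s, x ≤ M) (hA : A ⊆ s.erase M) :
    gamB s A = gamB (s.erase M) A + A.card := by
  unfold gamB
  rw [sdiff_erase_max hM hA, card_filter_product, card_filter_product,
    Finset.card_eq_sum_ones A, ← Finset.sum_add_distrib]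
  refine Finset.sum_congr rfl fun x hx => ?_
  have hxs := mem_erase.mp (hA hx)
  have hxM : x < M := lt_of_le_of_ne (hmax x hxs.2) hxs.1
  rw [filter_insert, if_pos hxM,
    card_insert_of_notMem (fun h => M_not_mem_diff hA (Finset.mem_of_mem_filter _ h))]

lemma gamA_insert_max (hM : M ∈ s) (hmax : ∀ x ∈ s, x ≤ M) (hA : A ⊆ s.erase M) :
    gamA s (insert M A) = gamA (s.erase M) A + (s.card - 1 - A.card) := by
  unfold gamA
  have hMA : M ∉ A := fun h => (mem_erase.mp (hA h)).1 rfl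
  have hd : s \ insert M A = s.erase M \ A := by
    ext x
    simp only [mem_sdiff, mem_insert, mem_erase, not_or]
    tauto
  rw [hd, card_filter_product, card_filter_product, Finset.sum_insert hMA]
  have h1 : ((s.erase M \ A).filter fun y => y < M) = s.erase M \ A := by
    refine Finset.filter_true_of_mem fun y hy => ?_
    have := mem_erase.mp (mem_sdiff.mp hy).1
    exact lt_of_le_of_ne (hmax y this.2) this.1
  rw [h1]
  have h2 : (s.erase M \ A).card = s.card - 1 - A.card := by
    rw [card_sdiff_of_subset hA, card_erase_of_mem hM]
  omega

lemma gamB_insert_max (hM : M ∈ s) (hmax : ∀ x ∈ s, x ≤ M) (hA : A ⊆ s.erase M) :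
    gamB s (insert M A) = gamB (s.erase M) A := by
  unfold gamB
  have hMA : M ∉ A := fun h => (mem_erase.mp (hA h)).1 rfl
  have hd : s \ insert M A = s.erase M \ A := by
    ext x
    simp only [mem_sdiff, mem_insert, mem_erase, not_or]
    tauto
  rw [hd, card_filter_product, card_filter_product, Finset.sum_insert hMA]
  have h1 : ((s.erase M \ A).filter fun y => M < y) = ∅ := by
    refine Finset.filter_false_of_mem fun y hy => ?_
    have := mem_erase.mp (mem_sdiff.mp hy).1
    exact not_lt.mpr (hmax y this.2)
  rw [h1]
  simp

end Gauss

section GaussMain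

variable {α : Type*} [DecidableEq α] [LinearOrder α]

lemma Gsum_zero (q₁ q₂ : F) (s : Finset α) : Gsum q₁ q₂ s 0 = 1 := by
  simp [Gsum, gamA, gamB]

theorem Gsum_eq_qbin (q₁ q₂ : F) (hq : ∀ m : ℕ, 1 ≤ m → qint q₁ q₂ m ≠ 0) :
    ∀ (n : ℕ) (s : Finset α), s.card = n → ∀ k ≤ n, Gsum q₁ q₂ s k = qbin q₁ q₂ n k := by
  intro n
  induction n with
  | zero =>
    intro s hs k hk
    interval_cases k
    rw [Gsum_zero, qbin_zero _ _ hq]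
  | succ n ih =>
    intro s hs k hk
    have hne : s.Nonempty := card_pos.mp (by omega)
    set M := s.max' hne with hMdef
    have hM : M ∈ s := s.max'_mem hne
    have hmax : ∀ x ∈ s, x ≤ M := fun x hx => s.le_max' x hx
    have hs' : (s.erase M).card = n := by rw [card_erase_of_mem hM, hs]; omega
    rcases Nat.eq_zero_or_pos k with rfl | hk1
    · rw [Gsum_zero, qbin_zero _ _ hq]
    · have hins : s = insert M (s.erase M) := (insert_erase hM).symm
      have hMe : M ∉ s.erase M := notMem_erase _ _
      have hkk : k = (k - 1) + 1 := by omega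
      have hpc : powersetCard k s = powersetCard k (s.erase M) ∪
          (powersetCard (k - 1) (s.erase M)).image (insert M) := by
        conv_lhs => rw [hins, hkk, powersetCard_succ_insert hMe]
        rw [Nat.succ_eq_add_one, ← hkk]
      have hdisj : Disjoint (powersetCard k (s.erase M))
          ((powersetCard (k - 1) (s.erase M)).image (insert M)) := by
        rw [Finset.disjoint_left]
        intro A h1 h2
        obtain ⟨B, _, rfl⟩ := Finset.mem_image.mp h2
        exact hMe ((mem_powersetCard.mp h1).1 (mem_insert_self M B))
      have hinj : ∀ A ∈ powersetCard (k - 1) (s.erase M),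
          ∀ B ∈ powersetCard (k - 1) (s.erase M), insert M A = insert M B → A = B := by
        intro A hA B hB h
        have hMA : M ∉ A := fun hx => hMe ((mem_powersetCard.mp hA).1 hx)
        have hMB : M ∉ B := fun hx => hMe ((mem_powersetCard.mp hB).1 hx)
        rw [← erase_insert hMA, h, erase_insert hMB]
      unfold Gsum
      rw [hpc, Finset.sum_union hdisj, Finset.sum_image hinj]
      have e1 : ∑ A ∈ powersetCard k (s.erase M), q₁ ^ gamB s A * q₂ ^ gamA s A
          = q₁ ^ k * Gsum q₁ q₂ (s.erase M) k := by
        rw [Gsum, Finset.mul_sum]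
        refine Finset.sum_congr rfl fun A hA => ?_
        obtain ⟨hAs, hAc⟩ := mem_powersetCard.mp hA
        rw [gamB_erase hM hmax hAs, gamA_erase hM hmax hAs, hAc, pow_add]
        ring
      have e2 : ∑ A ∈ powersetCard (k - 1) (s.erase M),
            q₁ ^ gamB s (insert M A) * q₂ ^ gamA s (insert M A)
          = q₂ ^ (n + 1 - k) * Gsum q₁ q₂ (s.erase M) (k - 1) := by
        rw [Gsum, Finset.mul_sum]
        refine Finset.sum_congr rfl fun A hA => ?_
        obtain ⟨hAs, hAc⟩ := mem_powersetCard.mp hA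
        rw [gamB_insert_max hM hmax hAs, gamA_insert_max hM hmax hAs, hAc, hs]
        have : n + 1 - 1 - (k - 1) = n + 1 - k := by omega
        rw [this, pow_add]
        ring
      rw [e1, e2]
      rcases Nat.lt_or_ge k (n + 1) with hlt | hge
      · rw [ih (s.erase M) hs' k (by omega), ih (s.erase M) hs' (k - 1) (by omega),
          qbin_rec q₁ q₂ hq hk1 (by omega)]
        ring
      · have hkn : k = n + 1 := by omega
        subst hkn
        have hz : Gsum q₁ q₂ (s.erase M) (n + 1) = 0 := by
          rw [Gsum, Finset.powersetCard_eq_empty.mpr (by omega), Finset.sum_empty]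
        rw [hz, Nat.add_sub_cancel, ih (s.erase M) hs' n (le_refl n), Nat.sub_self, pow_zero,
          qbin_self _ _ hq, qbin_self _ _ hq]
        ring

end GaussMain

section Part2

variable {n : ℕ}

lemma card_le_n (A : Finset (Fin n)) : A.card ≤ n :=
  le_trans (Finset.card_le_univ A) (by simp)

lemma card_compl_eq (A : Finset (Fin n)) : Aᶜ.card = n - A.card := by
  rw [Finset.card_compl, Fintype.card_fin]

/-- values placed to the left of the max -/
def vL (A : Finset (Fin n)) : Fin A.card → Fin (n + 1) := fun u =>
  Fin.castSucc (A.orderEmbOfFin rfl u)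

/-- values placed to the right of the max -/
def vR (A : Finset (Fin n)) : Fin (n - A.card) → Fin (n + 1) := fun v =>
  Fin.castSucc ((Aᶜ).orderEmbOfFin (card_compl_eq A) v)

/-- positions to the left of the max -/
def eL (A : Finset (Fin n)) : Fin A.card → Fin (n + 1) := fun u =>
  ⟨u.val, by have h1 := u.isLt; have h2 := card_le_n A; omega⟩

/-- position of the max -/
def mid (A : Finset (Fin n)) : Fin (n + 1) :=
  ⟨A.card, by have := card_le_n A; omega⟩

/-- positions to the right of the max -/
def eR (A : Finset (Fin n)) : Fin (n - A.card) → Fin (n + 1) := fun v =>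
  ⟨A.card + 1 + v.val, by have h1 := v.isLt; have h2 := card_le_n A; omega⟩

def bfun (A : Finset (Fin n)) (σ : Equiv.Perm (Fin A.card))
    (τ : Equiv.Perm (Fin (n - A.card))) : Fin (n + 1) → Fin (n + 1) := fun i =>
  if h : i.val < A.card then vL A (σ ⟨i.val, h⟩)
  else if h' : i.val = A.card then Fin.last n
  else vR A (τ ⟨i.val - (A.card + 1), by have := i.isLt; omega⟩)

variable {A : Finset (Fin n)} {σ : Equiv.Perm (Fin A.card)} {τ : Equiv.Perm (Fin (n - A.card))}

@[simp] lemma bfun_eL (u : Fin A.card) : bfun A σ τ (eL A u) = vL A (σ u) := by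
  unfold bfun eL
  rw [dif_pos u.isLt]

lemma eL_val (u : Fin A.card) : (eL A u).val = u.val := rfl
lemma mid_val : (mid A).val = A.card := rfl
lemma eR_val (v : Fin (n - A.card)) : (eR A v).val = A.card + 1 + v.val := rfl

@[simp] lemma bfun_mid : bfun A σ τ (mid A) = Fin.last n := by
  unfold bfun
  split_ifs with h1 h2
  · rw [mid_val] at h1; omega
  · rfl
  · rw [mid_val] at h2; omega

@[simp] lemma bfun_eR (v : Fin (n - A.card)) : bfun A σ τ (eR A v) = vR A (τ v) := by
  unfold bfun
  split_ifs with h1 h2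
  · rw [eR_val] at h1; omega
  · rw [eR_val] at h2; omega
  · congr 1
    congr 1
    ext
    show (eR A v).val - (A.card + 1) = v.val
    rw [eR_val]; omega

-- basic order facts on positions
lemma eL_lt_eL {u u' : Fin A.card} : eL A u < eL A u' ↔ u < u' := Iff.rfl
lemma eL_lt_mid (u : Fin A.card) : eL A u < mid A := u.isLt
lemma mid_lt_eR (v : Fin (n - A.card)) : mid A < eR A v := by
  simp [mid, eR, Fin.lt_def]; omega
lemma eL_lt_eR (u : Fin A.card) (v : Fin (n - A.card)) : eL A u < eR A v := by
  have h := u.isLt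
  simp only [eL, eR, Fin.lt_def]
  omega
lemma eR_lt_eR {v v' : Fin (n - A.card)} : eR A v < eR A v' ↔ v < v' := by
  simp only [eR, Fin.lt_def]; omega

-- basic order facts on values
lemma vL_lt_vL {u u' : Fin A.card} : vL A u < vL A u' ↔ u < u' := by
  simp only [vL, Fin.castSucc_lt_castSucc_iff, OrderEmbedding.lt_iff_lt]
lemma vR_lt_vR {v v' : Fin (n - A.card)} : vR A v < vR A v' ↔ v < v' := by
  simp only [vR, Fin.castSucc_lt_castSucc_iff, OrderEmbedding.lt_iff_lt]
lemma vL_lt_last (u : Fin A.card) : vL A u < Fin.last n := Fin.castSucc_lt_last _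
lemma vR_lt_last (v : Fin (n - A.card)) : vR A v < Fin.last n := Fin.castSucc_lt_last _
lemma vL_ne_vR (u : Fin A.card) (v : Fin (n - A.card)) : vL A u ≠ vR A v := by
  intro h
  have h1 : A.orderEmbOfFin rfl u ∈ A := Finset.orderEmbOfFin_mem A rfl u
  have h2 : (Aᶜ).orderEmbOfFin (card_compl_eq A) v ∈ Aᶜ :=
    Finset.orderEmbOfFin_mem (Aᶜ) (card_compl_eq A) v
  rw [vL, vR, Fin.castSucc_inj] at h
  rw [h] at h1
  exact (Finset.mem_compl.mp h2) h1

/-- trichotomy of positions -/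
lemma pos_cases (i : Fin (n + 1)) :
    (∃ u, i = eL A u) ∨ i = mid A ∨ ∃ v, i = eR A v := by
  rcases lt_trichotomy i.val A.card with h | h | h
  · exact Or.inl ⟨⟨i.val, h⟩, by simp [eL]⟩
  · exact Or.inr (Or.inl (by simp [mid, Fin.ext_iff, h]))
  · refine Or.inr (Or.inr ⟨⟨i.val - (A.card + 1), by have := i.isLt; omega⟩, ?_⟩)
    simp only [eR, Fin.ext_iff]
    omega

lemma bfun_injective : Function.Injective (bfun A σ τ) := by
  intro i j h
  rcases pos_cases (A := A) i with ⟨u, rfl⟩ | rfl | ⟨v, rfl⟩ <;>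
    rcases pos_cases (A := A) j with ⟨u', rfl⟩ | rfl | ⟨v', rfl⟩ <;>
    simp only [bfun_eL, bfun_mid, bfun_eR] at h
  · have : σ u = σ u' := by
      have := vL_lt_vL (A := A) (u := σ u) (u' := σ u')
      have := vL_lt_vL (A := A) (u := σ u') (u' := σ u)
      rcases lt_trichotomy (σ u) (σ u') with hc | hc | hc
      · exact absurd h (ne_of_lt (vL_lt_vL.mpr hc))
      · exact hc
      · exact absurd h.symm (ne_of_lt (vL_lt_vL.mpr hc))
    have : u = u' := σ.injective this
    simp [eL, this]
  · exact absurd h (ne_of_lt (vL_lt_last _))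
  · exact absurd h (vL_ne_vR _ _)
  · exact absurd h.symm (ne_of_lt (vL_lt_last _))
  · rfl
  · exact absurd h.symm (ne_of_lt (vR_lt_last _))
  · exact absurd h.symm (vL_ne_vR _ _)
  · exact absurd h (ne_of_lt (vR_lt_last _))
  · have : τ v = τ v' := by
      rcases lt_trichotomy (τ v) (τ v') with hc | hc | hc
      · exact absurd h (ne_of_lt (vR_lt_vR.mpr hc))
      · exact hc
      · exact absurd h.symm (ne_of_lt (vR_lt_vR.mpr hc))
    have : v = v' := τ.injective this
    simp [eR, this]

noncomputable def Phi : (Σ A : Finset (Fin n), Equiv.Perm (Fin A.card) × Equiv.Perm (Fin (n - A.card))) →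
    Equiv.Perm (Fin (n + 1)) := fun x =>
  Equiv.ofBijective (bfun x.1 x.2.1 x.2.2)
    ((Finite.injective_iff_bijective).mp bfun_injective)

lemma Phi_apply (x : Σ A : Finset (Fin n), Equiv.Perm (Fin A.card) × Equiv.Perm (Fin (n - A.card)))
    (i : Fin (n + 1)) : Phi x i = bfun x.1 x.2.1 x.2.2 i := rfl

end Part2

section Statistics

variable {n : ℕ} {A : Finset (Fin n)} {σ : Equiv.Perm (Fin A.card)}
  {τ : Equiv.Perm (Fin (n - A.card))}

lemma eL_injective : Function.Injective (eL A) := by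
  intro a b h
  have h2 : (eL A a).val = (eL A b).val := congrArg Fin.val h
  exact Fin.ext h2

lemma eR_injective : Function.Injective (eR A) := by
  intro a b h
  have h2 : (eR A a).val = (eR A b).val := congrArg Fin.val h
  have h3 : A.card + 1 + a.val = A.card + 1 + b.val := h2
  exact Fin.ext (by omega)

lemma eL_ne_mid (u : Fin A.card) : eL A u ≠ mid A := ne_of_lt (eL_lt_mid u)
lemma eL_ne_eR (u : Fin A.card) (v : Fin (n - A.card)) : eL A u ≠ eR A v :=
  ne_of_lt (eL_lt_eR u v)
lemma mid_ne_eR (v : Fin (n - A.card)) : mid A ≠ eR A v := ne_of_lt (mid_lt_eR v)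

lemma between_eL {u u' : Fin A.card} {a : Fin (n + 1)} (h1 : eL A u < a) (h2 : a < eL A u') :
    ∃ w : Fin A.card, a = eL A w ∧ u < w ∧ w < u' := by
  have hval : a.val < u'.val := h2
  have hlt : a.val < A.card := lt_trans hval u'.isLt
  exact ⟨⟨a.val, hlt⟩, Fin.ext rfl, h1, hval⟩

lemma between_eR {v v' : Fin (n - A.card)} {a : Fin (n + 1)} (h1 : eR A v < a)
    (h2 : a < eR A v') :
    ∃ w : Fin (n - A.card), a = eR A w ∧ v < w ∧ w < v' := by
  have hv1 : A.card + 1 + v.val < a.val := h1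
  have hv2 : a.val < A.card + 1 + v'.val := h2
  have hlt : a.val - (A.card + 1) < n - A.card := by have := v'.isLt; omega
  refine ⟨⟨a.val - (A.card + 1), hlt⟩, Fin.ext ?_, ?_, ?_⟩
  · show a.val = A.card + 1 + (a.val - (A.card + 1)); omega
  · show v.val < a.val - (A.card + 1); omega
  · show a.val - (A.card + 1) < v'.val; omega

lemma S1_Phi : S1 (Phi ⟨A, σ, τ⟩) = S1 σ + S1 τ + A.card := by
  classical
  set π := Phi ⟨A, σ, τ⟩ with hπdef
  have hL : ∀ u, π (eL A u) = vL A (σ u) := fun u => bfun_eL u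
  have hM : π (mid A) = Fin.last n := bfun_mid
  have hR : ∀ v, π (eR A v) = vR A (τ v) := fun v => bfun_eR v
  have main : (univ.filter fun p : Fin (n + 1) × Fin (n + 1) =>
      p.1 < p.2 ∧ π p.1 < π p.2 ∧ ∀ a, p.1 < a → a < p.2 → ¬(π p.2 < π a)) =
      ((univ.filter fun p : Fin A.card × Fin A.card =>
          p.1 < p.2 ∧ σ p.1 < σ p.2 ∧ ∀ a, p.1 < a → a < p.2 → ¬(σ p.2 < σ a)).image
            (Prod.map (eL A) (eL A)) ∪
        (univ.filter fun p : Fin (n - A.card) × Fin (n - A.card) =>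
          p.1 < p.2 ∧ τ p.1 < τ p.2 ∧ ∀ a, p.1 < a → a < p.2 → ¬(τ p.2 < τ a)).image
            (Prod.map (eR A) (eR A))) ∪
      (univ : Finset (Fin A.card)).image (fun u => (eL A u, mid A)) := by
    ext ⟨i, j⟩
    rw [Finset.mem_filter]
    simp only [Finset.mem_univ, true_and, Finset.mem_union]
    constructor
    · rintro ⟨h1, h2, h3⟩
      rcases pos_cases (A := A) i with ⟨u, rfl⟩ | rfl | ⟨v, rfl⟩ <;>
        rcases pos_cases (A := A) j with ⟨u', rfl⟩ | rfl | ⟨v', rfl⟩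
      · refine Or.inl (Or.inl (Finset.mem_image.mpr ⟨(u, u'),
          Finset.mem_filter.mpr ⟨Finset.mem_univ _, h1, ?_, ?_⟩, rfl⟩))
        · have h2' := h2; rw [hL, hL] at h2'; exact vL_lt_vL.mp h2'
        · intro w hw1 hw2 hcon
          exact h3 (eL A w) hw1 hw2 (by rw [hL, hL]; exact vL_lt_vL.mpr hcon)
      · exact Or.inr (Finset.mem_image.mpr ⟨u, Finset.mem_univ _, rfl⟩)
      · exact absurd (by rw [hM, hR]; exact vR_lt_last _)
          (h3 (mid A) (eL_lt_mid u) (mid_lt_eR v'))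
      · exfalso
        have hc : A.card < u'.val := h1
        have := u'.isLt
        omega
      · exact absurd h1 (lt_irrefl _)
      · exfalso
        rw [hM, hR] at h2
        exact absurd h2 (not_lt.mpr (le_of_lt (vR_lt_last (τ v'))))
      · exfalso
        have hc : A.card + 1 + v.val < u'.val := h1
        have := u'.isLt
        omega
      · exfalso
        have hc : A.card + 1 + v.val < A.card := h1
        omega
      · refine Or.inl (Or.inr (Finset.mem_image.mpr ⟨(v, v'),
          Finset.mem_filter.mpr ⟨Finset.mem_univ _, eR_lt_eR.mp h1, ?_, ?_⟩, rfl⟩))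
        · have h2' := h2; rw [hR, hR] at h2'; exact vR_lt_vR.mp h2'
        · intro w hw1 hw2 hcon
          exact h3 (eR A w) (eR_lt_eR.mpr hw1) (eR_lt_eR.mpr hw2)
            (by rw [hR, hR]; exact vR_lt_vR.mpr hcon)
    · rintro ((h | h) | h)
      · obtain ⟨⟨u, u'⟩, hmem, heq⟩ := Finset.mem_image.mp h
        obtain ⟨-, h1, h2, h3⟩ := Finset.mem_filter.mp hmem
        simp only [Prod.map_apply] at heq
        rw [Prod.mk.injEq] at heq
        obtain ⟨rfl, rfl⟩ := heq
        refine ⟨h1, by rw [hL, hL]; exact vL_lt_vL.mpr h2, ?_⟩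
        intro a ha1 ha2 hcon
        obtain ⟨w, rfl, hw1, hw2⟩ := between_eL ha1 ha2
        rw [hL, hL] at hcon
        exact h3 w hw1 hw2 (vL_lt_vL.mp hcon)
      · obtain ⟨⟨v, v'⟩, hmem, heq⟩ := Finset.mem_image.mp h
        obtain ⟨-, h1, h2, h3⟩ := Finset.mem_filter.mp hmem
        simp only [Prod.map_apply] at heq
        rw [Prod.mk.injEq] at heq
        obtain ⟨rfl, rfl⟩ := heq
        refine ⟨eR_lt_eR.mpr h1, by rw [hR, hR]; exact vR_lt_vR.mpr h2, ?_⟩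
        intro a ha1 ha2 hcon
        obtain ⟨w, rfl, hw1, hw2⟩ := between_eR ha1 ha2
        rw [hR, hR] at hcon
        exact h3 w hw1 hw2 (vR_lt_vR.mp hcon)
      · obtain ⟨u, -, heq⟩ := Finset.mem_image.mp h
        rw [Prod.mk.injEq] at heq
        obtain ⟨rfl, rfl⟩ := heq
        refine ⟨eL_lt_mid u, by rw [hL, hM]; exact vL_lt_last _, ?_⟩
        intro a ha1 ha2 hcon
        rw [hM] at hcon
        exact absurd hcon (not_lt.mpr (Fin.le_last _))
  have d1 : Disjoint
      ((univ.filter fun p : Fin A.card × Fin A.card =>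
        p.1 < p.2 ∧ σ p.1 < σ p.2 ∧ ∀ a, p.1 < a → a < p.2 → ¬(σ p.2 < σ a)).image
          (Prod.map (eL A) (eL A)))
      ((univ.filter fun p : Fin (n - A.card) × Fin (n - A.card) =>
        p.1 < p.2 ∧ τ p.1 < τ p.2 ∧ ∀ a, p.1 < a → a < p.2 → ¬(τ p.2 < τ a)).image
          (Prod.map (eR A) (eR A))) := by
    rw [Finset.disjoint_left]
    rintro p h1 h2
    obtain ⟨⟨u, u'⟩, -, heq1⟩ := Finset.mem_image.mp h1
    obtain ⟨⟨v, v'⟩, -, heq2⟩ := Finset.mem_image.mp h2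
    simp only [Prod.map_apply] at heq1 heq2
    rw [← heq2, Prod.mk.injEq] at heq1
    exact eL_ne_eR u v heq1.1
  have d2 : Disjoint
      (((univ.filter fun p : Fin A.card × Fin A.card =>
        p.1 < p.2 ∧ σ p.1 < σ p.2 ∧ ∀ a, p.1 < a → a < p.2 → ¬(σ p.2 < σ a)).image
          (Prod.map (eL A) (eL A))) ∪
       ((univ.filter fun p : Fin (n - A.card) × Fin (n - A.card) =>
        p.1 < p.2 ∧ τ p.1 < τ p.2 ∧ ∀ a, p.1 < a → a < p.2 → ¬(τ p.2 < τ a)).image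
          (Prod.map (eR A) (eR A))))
      ((univ : Finset (Fin A.card)).image (fun u => (eL A u, mid A))) := by
    rw [Finset.disjoint_left]
    rintro p h12 h3
    obtain ⟨u0, -, heq3⟩ := Finset.mem_image.mp h3
    rcases Finset.mem_union.mp h12 with h1 | h2
    · obtain ⟨⟨u, u'⟩, -, heq1⟩ := Finset.mem_image.mp h1
      simp only [Prod.map_apply] at heq1
      rw [← heq3, Prod.mk.injEq] at heq1
      exact eL_ne_mid u' heq1.2
    · obtain ⟨⟨v, v'⟩, -, heq2⟩ := Finset.mem_image.mp h2
      simp only [Prod.map_apply] at heq2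
      rw [← heq3, Prod.mk.injEq] at heq2
      exact mid_ne_eR v' heq2.2.symm
  rw [S1, main, Finset.card_union_of_disjoint d2, Finset.card_union_of_disjoint d1,
    Finset.card_image_of_injective _ (eL_injective.prodMap eL_injective),
    Finset.card_image_of_injective _ (eR_injective.prodMap eR_injective),
    Finset.card_image_of_injective _
      (fun a b h => eL_injective (congrArg Prod.fst h) : Function.Injective
        fun u : Fin A.card => (eL A u, mid A)),
    Finset.card_univ, Fintype.card_fin]
  rfl


lemma S2_Phi : S2 (Phi ⟨A, σ, τ⟩) = S2 σ + S2 τ + (n - A.card) := by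
  classical
  set π := Phi ⟨A, σ, τ⟩ with hπdef
  have hL : ∀ u, π (eL A u) = vL A (σ u) := fun u => bfun_eL u
  have hM : π (mid A) = Fin.last n := bfun_mid
  have hR : ∀ v, π (eR A v) = vR A (τ v) := fun v => bfun_eR v
  have main : (univ.filter fun p : Fin (n + 1) × Fin (n + 1) =>
      p.1 < p.2 ∧ π p.2 < π p.1 ∧ ∀ a, p.1 < a → a < p.2 → ¬(π p.1 < π a)) =
      ((univ.filter fun p : Fin A.card × Fin A.card =>
          p.1 < p.2 ∧ σ p.2 < σ p.1 ∧ ∀ a, p.1 < a → a < p.2 → ¬(σ p.1 < σ a)).image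
            (Prod.map (eL A) (eL A)) ∪
        (univ.filter fun p : Fin (n - A.card) × Fin (n - A.card) =>
          p.1 < p.2 ∧ τ p.2 < τ p.1 ∧ ∀ a, p.1 < a → a < p.2 → ¬(τ p.1 < τ a)).image
            (Prod.map (eR A) (eR A))) ∪
      (univ : Finset (Fin (n - A.card))).image (fun v => (mid A, eR A v)) := by
    ext ⟨i, j⟩
    rw [Finset.mem_filter]
    simp only [Finset.mem_univ, true_and, Finset.mem_union]
    constructor
    · rintro ⟨h1, h2, h3⟩
      rcases pos_cases (A := A) i with ⟨u, rfl⟩ | rfl | ⟨v, rfl⟩ <;>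
        rcases pos_cases (A := A) j with ⟨u', rfl⟩ | rfl | ⟨v', rfl⟩
      · refine Or.inl (Or.inl (Finset.mem_image.mpr ⟨(u, u'),
          Finset.mem_filter.mpr ⟨Finset.mem_univ _, h1, ?_, ?_⟩, rfl⟩))
        · have h2' := h2; rw [hL, hL] at h2'; exact vL_lt_vL.mp h2'
        · intro w hw1 hw2 hcon
          exact h3 (eL A w) hw1 hw2 (by rw [hL, hL]; exact vL_lt_vL.mpr hcon)
      · exfalso
        rw [hL, hM] at h2
        exact absurd h2 (not_lt.mpr (le_of_lt (vL_lt_last (σ u))))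
      · exfalso
        exact h3 (mid A) (eL_lt_mid u) (mid_lt_eR v')
          (by rw [hL, hM]; exact vL_lt_last (σ u))
      · exfalso
        have hc : A.card < u'.val := h1
        have := u'.isLt
        omega
      · exact absurd h1 (lt_irrefl _)
      · exact Or.inr (Finset.mem_image.mpr ⟨v', Finset.mem_univ _, rfl⟩)
      · exfalso
        have hc : A.card + 1 + v.val < u'.val := h1
        have := u'.isLt
        omega
      · exfalso
        have hc : A.card + 1 + v.val < A.card := h1
        omega
      · refine Or.inl (Or.inr (Finset.mem_image.mpr ⟨(v, v'),
          Finset.mem_filter.mpr ⟨Finset.mem_univ _, eR_lt_eR.mp h1, ?_, ?_⟩, rfl⟩))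
        · have h2' := h2; rw [hR, hR] at h2'; exact vR_lt_vR.mp h2'
        · intro w hw1 hw2 hcon
          exact h3 (eR A w) (eR_lt_eR.mpr hw1) (eR_lt_eR.mpr hw2)
            (by rw [hR, hR]; exact vR_lt_vR.mpr hcon)
    · rintro ((h | h) | h)
      · obtain ⟨⟨u, u'⟩, hmem, heq⟩ := Finset.mem_image.mp h
        obtain ⟨-, h1, h2, h3⟩ := Finset.mem_filter.mp hmem
        simp only [Prod.map_apply] at heq
        rw [Prod.mk.injEq] at heq
        obtain ⟨rfl, rfl⟩ := heq
        refine ⟨h1, by rw [hL, hL]; exact vL_lt_vL.mpr h2, ?_⟩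
        intro a ha1 ha2 hcon
        obtain ⟨w, rfl, hw1, hw2⟩ := between_eL ha1 ha2
        rw [hL, hL] at hcon
        exact h3 w hw1 hw2 (vL_lt_vL.mp hcon)
      · obtain ⟨⟨v, v'⟩, hmem, heq⟩ := Finset.mem_image.mp h
        obtain ⟨-, h1, h2, h3⟩ := Finset.mem_filter.mp hmem
        simp only [Prod.map_apply] at heq
        rw [Prod.mk.injEq] at heq
        obtain ⟨rfl, rfl⟩ := heq
        refine ⟨eR_lt_eR.mpr h1, by rw [hR, hR]; exact vR_lt_vR.mpr h2, ?_⟩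
        intro a ha1 ha2 hcon
        obtain ⟨w, rfl, hw1, hw2⟩ := between_eR ha1 ha2
        rw [hR, hR] at hcon
        exact h3 w hw1 hw2 (vR_lt_vR.mp hcon)
      · obtain ⟨v, -, heq⟩ := Finset.mem_image.mp h
        rw [Prod.mk.injEq] at heq
        obtain ⟨rfl, rfl⟩ := heq
        refine ⟨mid_lt_eR v, by rw [hM, hR]; exact vR_lt_last _, ?_⟩
        intro a ha1 ha2 hcon
        rw [hM] at hcon
        exact absurd hcon (not_lt.mpr (Fin.le_last _))
  have d1 : Disjoint
      ((univ.filter fun p : Fin A.card × Fin A.card =>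
        p.1 < p.2 ∧ σ p.2 < σ p.1 ∧ ∀ a, p.1 < a → a < p.2 → ¬(σ p.1 < σ a)).image
          (Prod.map (eL A) (eL A)))
      ((univ.filter fun p : Fin (n - A.card) × Fin (n - A.card) =>
        p.1 < p.2 ∧ τ p.2 < τ p.1 ∧ ∀ a, p.1 < a → a < p.2 → ¬(τ p.1 < τ a)).image
          (Prod.map (eR A) (eR A))) := by
    rw [Finset.disjoint_left]
    rintro p h1 h2
    obtain ⟨⟨u, u'⟩, -, heq1⟩ := Finset.mem_image.mp h1
    obtain ⟨⟨v, v'⟩, -, heq2⟩ := Finset.mem_image.mp h2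
    simp only [Prod.map_apply] at heq1 heq2
    rw [← heq2, Prod.mk.injEq] at heq1
    exact eL_ne_eR u v heq1.1
  have d2 : Disjoint
      (((univ.filter fun p : Fin A.card × Fin A.card =>
        p.1 < p.2 ∧ σ p.2 < σ p.1 ∧ ∀ a, p.1 < a → a < p.2 → ¬(σ p.1 < σ a)).image
          (Prod.map (eL A) (eL A))) ∪
       ((univ.filter fun p : Fin (n - A.card) × Fin (n - A.card) =>
        p.1 < p.2 ∧ τ p.2 < τ p.1 ∧ ∀ a, p.1 < a → a < p.2 → ¬(τ p.1 < τ a)).image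
          (Prod.map (eR A) (eR A))))
      ((univ : Finset (Fin (n - A.card))).image (fun v => (mid A, eR A v))) := by
    rw [Finset.disjoint_left]
    rintro p h12 h3
    obtain ⟨v0, -, heq3⟩ := Finset.mem_image.mp h3
    rcases Finset.mem_union.mp h12 with h1 | h2
    · obtain ⟨⟨u, u'⟩, -, heq1⟩ := Finset.mem_image.mp h1
      simp only [Prod.map_apply] at heq1
      rw [← heq3, Prod.mk.injEq] at heq1
      exact eL_ne_mid u heq1.1
    · obtain ⟨⟨v, v'⟩, -, heq2⟩ := Finset.mem_image.mp h2
      simp only [Prod.map_apply] at heq2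
      rw [← heq3, Prod.mk.injEq] at heq2
      exact mid_ne_eR v heq2.1.symm
  rw [S2, main, Finset.card_union_of_disjoint d2, Finset.card_union_of_disjoint d1,
    Finset.card_image_of_injective _ (eL_injective.prodMap eL_injective),
    Finset.card_image_of_injective _ (eR_injective.prodMap eR_injective),
    Finset.card_image_of_injective _
      (fun a b h => eR_injective (congrArg Prod.snd h) : Function.Injective
        fun v : Fin (n - A.card) => (mid A, eR A v)),
    Finset.card_univ, Fintype.card_fin]
  rfl

lemma not_mid_lt_eL (u : Fin A.card) : ¬(mid A < eL A u) := by
  intro h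
  have hc : A.card < u.val := h
  have := u.isLt
  omega

lemma not_eR_lt_eL (v : Fin (n - A.card)) (u : Fin A.card) : ¬(eR A v < eL A u) := by
  intro h
  have hc : A.card + 1 + v.val < u.val := h
  have := u.isLt
  omega

lemma not_eR_lt_mid (v : Fin (n - A.card)) : ¬(eR A v < mid A) := by
  intro h
  have hc : A.card + 1 + v.val < A.card := h
  omega

lemma tripleMap_inj {β γ : Type*} {f : β → γ} (hf : Function.Injective f) :
    Function.Injective (fun t : β × β × β => (f t.1, f t.2.1, f t.2.2)) := by
  rintro ⟨a, b, c⟩ ⟨a', b', c'⟩ h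
  simp only [Prod.mk.injEq] at h
  exact Prod.ext (hf h.1) (Prod.ext (hf h.2.1) (hf h.2.2))

lemma crossMap_inj : Function.Injective
    (fun p : Fin A.card × Fin (n - A.card) => (eL A p.1, mid A, eR A p.2)) := by
  rintro ⟨a, b⟩ ⟨a', b'⟩ h
  simp only [Prod.mk.injEq] at h
  exact Prod.ext (eL_injective h.1) (eR_injective h.2.2)

lemma T1_Phi : T1 (Phi ⟨A, σ, τ⟩) = T1 σ + T1 τ +
    (univ.filter fun p : Fin A.card × Fin (n - A.card) =>
      vL A (σ p.1) < vR A (τ p.2)).card := by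
  classical
  set π := Phi ⟨A, σ, τ⟩ with hπdef
  have hL : ∀ u, π (eL A u) = vL A (σ u) := fun u => bfun_eL u
  have hM : π (mid A) = Fin.last n := bfun_mid
  have hR : ∀ v, π (eR A v) = vR A (τ v) := fun v => bfun_eR v
  have main : (univ.filter fun t : Fin (n + 1) × Fin (n + 1) × Fin (n + 1) =>
      t.1 < t.2.1 ∧ t.2.1 < t.2.2 ∧ π t.1 < π t.2.2 ∧ π t.2.2 < π t.2.1 ∧
        ∀ a, t.1 < a → a < t.2.2 → ¬(π t.2.1 < π a)) =
      ((univ.filter fun t : Fin A.card × Fin A.card × Fin A.card =>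
          t.1 < t.2.1 ∧ t.2.1 < t.2.2 ∧ σ t.1 < σ t.2.2 ∧ σ t.2.2 < σ t.2.1 ∧
            ∀ a, t.1 < a → a < t.2.2 → ¬(σ t.2.1 < σ a)).image
            (fun t => (eL A t.1, eL A t.2.1, eL A t.2.2)) ∪
        (univ.filter fun t : Fin (n - A.card) × Fin (n - A.card) × Fin (n - A.card) =>
          t.1 < t.2.1 ∧ t.2.1 < t.2.2 ∧ τ t.1 < τ t.2.2 ∧ τ t.2.2 < τ t.2.1 ∧
            ∀ a, t.1 < a → a < t.2.2 → ¬(τ t.2.1 < τ a)).image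
            (fun t => (eR A t.1, eR A t.2.1, eR A t.2.2))) ∪
      (univ.filter fun p : Fin A.card × Fin (n - A.card) =>
          vL A (σ p.1) < vR A (τ p.2)).image
        (fun p => (eL A p.1, mid A, eR A p.2)) := by
    ext ⟨i, j, l⟩
    rw [Finset.mem_filter]
    simp only [Finset.mem_univ, true_and, Finset.mem_union]
    constructor
    · rintro ⟨h1, h2, h3, h4, h5⟩
      rcases pos_cases (A := A) i with ⟨u, rfl⟩ | rfl | ⟨v, rfl⟩ <;>
        rcases pos_cases (A := A) j with ⟨u', rfl⟩ | rfl | ⟨v', rfl⟩ <;>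
        rcases pos_cases (A := A) l with ⟨u'', rfl⟩ | rfl | ⟨v'', rfl⟩
      -- i = eL u
      · refine Or.inl (Or.inl (Finset.mem_image.mpr ⟨(u, u', u''),
          Finset.mem_filter.mpr ⟨Finset.mem_univ _, h1, h2, ?_, ?_, ?_⟩, rfl⟩))
        · have h3' := h3; rw [hL, hL] at h3'; exact vL_lt_vL.mp h3'
        · have h4' := h4; rw [hL, hL] at h4'; exact vL_lt_vL.mp h4'
        · intro w hw1 hw2 hcon
          exact h5 (eL A w) hw1 hw2 (by rw [hL, hL]; exact vL_lt_vL.mpr hcon)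
      · exfalso
        rw [hM, hL] at h4
        exact absurd h4 (not_lt.mpr (le_of_lt (vL_lt_last (σ u'))))
      · exfalso
        exact h5 (mid A) (eL_lt_mid u) (mid_lt_eR v'')
          (by rw [hL, hM]; exact vL_lt_last (σ u'))
      · exact absurd h2 (not_mid_lt_eL u'')
      · exact absurd h2 (lt_irrefl _)
      · refine Or.inr (Finset.mem_image.mpr ⟨(u, v''),
          Finset.mem_filter.mpr ⟨Finset.mem_univ _, ?_⟩, rfl⟩)
        rw [hL, hR] at h3
        exact h3
      · exact absurd h2 (not_eR_lt_eL v' u'')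
      · exact absurd h2 (not_eR_lt_mid v')
      · exfalso
        exact h5 (mid A) (eL_lt_mid u) (mid_lt_eR v'')
          (by rw [hR, hM]; exact vR_lt_last (τ v'))
      -- i = mid
      · exact absurd h1 (not_mid_lt_eL u')
      · exact absurd h1 (not_mid_lt_eL u')
      · exact absurd h1 (not_mid_lt_eL u')
      · exact absurd h1 (lt_irrefl _)
      · exact absurd h1 (lt_irrefl _)
      · exact absurd h1 (lt_irrefl _)
      · exact absurd h2 (not_eR_lt_eL v' u'')
      · exact absurd h2 (not_eR_lt_mid v')
      · exfalso
        rw [hM, hR] at h3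
        exact absurd h3 (not_lt.mpr (le_of_lt (vR_lt_last (τ v''))))
      -- i = eR v
      · exact absurd h1 (not_eR_lt_eL v u')
      · exact absurd h1 (not_eR_lt_eL v u')
      · exact absurd h1 (not_eR_lt_eL v u')
      · exact absurd h1 (not_eR_lt_mid v)
      · exact absurd h1 (not_eR_lt_mid v)
      · exact absurd h1 (not_eR_lt_mid v)
      · exact absurd h2 (not_eR_lt_eL v' u'')
      · exact absurd h2 (not_eR_lt_mid v')
      · refine Or.inl (Or.inr (Finset.mem_image.mpr ⟨(v, v', v''),
          Finset.mem_filter.mpr ⟨Finset.mem_univ _, eR_lt_eR.mp h1, eR_lt_eR.mp h2,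
            ?_, ?_, ?_⟩, rfl⟩))
        · have h3' := h3; rw [hR, hR] at h3'; exact vR_lt_vR.mp h3'
        · have h4' := h4; rw [hR, hR] at h4'; exact vR_lt_vR.mp h4'
        · intro w hw1 hw2 hcon
          exact h5 (eR A w) (eR_lt_eR.mpr hw1) (eR_lt_eR.mpr hw2)
            (by rw [hR, hR]; exact vR_lt_vR.mpr hcon)
    · rintro ((h | h) | h)
      · obtain ⟨⟨u, u', u''⟩, hmem, heq⟩ := Finset.mem_image.mp h
        obtain ⟨-, h1, h2, h3, h4, h5⟩ := Finset.mem_filter.mp hmem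
        rw [Prod.mk.injEq, Prod.mk.injEq] at heq
        obtain ⟨rfl, rfl, rfl⟩ := heq
        refine ⟨h1, h2, by rw [hL, hL]; exact vL_lt_vL.mpr h3,
          by rw [hL, hL]; exact vL_lt_vL.mpr h4, ?_⟩
        intro a ha1 ha2 hcon
        obtain ⟨w, rfl, hw1, hw2⟩ := between_eL ha1 ha2
        rw [hL, hL] at hcon
        exact h5 w hw1 hw2 (vL_lt_vL.mp hcon)
      · obtain ⟨⟨v, v', v''⟩, hmem, heq⟩ := Finset.mem_image.mp h
        obtain ⟨-, h1, h2, h3, h4, h5⟩ := Finset.mem_filter.mp hmem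
        rw [Prod.mk.injEq, Prod.mk.injEq] at heq
        obtain ⟨rfl, rfl, rfl⟩ := heq
        refine ⟨eR_lt_eR.mpr h1, eR_lt_eR.mpr h2, by rw [hR, hR]; exact vR_lt_vR.mpr h3,
          by rw [hR, hR]; exact vR_lt_vR.mpr h4, ?_⟩
        intro a ha1 ha2 hcon
        obtain ⟨w, rfl, hw1, hw2⟩ := between_eR ha1 ha2
        rw [hR, hR] at hcon
        exact h5 w hw1 hw2 (vR_lt_vR.mp hcon)
      · obtain ⟨⟨u, v⟩, hmem, heq⟩ := Finset.mem_image.mp h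
        obtain ⟨-, hcond⟩ := Finset.mem_filter.mp hmem
        rw [Prod.mk.injEq, Prod.mk.injEq] at heq
        obtain ⟨rfl, rfl, rfl⟩ := heq
        refine ⟨eL_lt_mid u, mid_lt_eR v, by rw [hL, hR]; exact hcond,
          by rw [hR, hM]; exact vR_lt_last _, ?_⟩
        intro a ha1 ha2 hcon
        rw [hM] at hcon
        exact absurd hcon (not_lt.mpr (Fin.le_last _))
  have d1 : Disjoint
      ((univ.filter fun t : Fin A.card × Fin A.card × Fin A.card =>
          t.1 < t.2.1 ∧ t.2.1 < t.2.2 ∧ σ t.1 < σ t.2.2 ∧ σ t.2.2 < σ t.2.1 ∧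
            ∀ a, t.1 < a → a < t.2.2 → ¬(σ t.2.1 < σ a)).image
            (fun t => (eL A t.1, eL A t.2.1, eL A t.2.2)))
      ((univ.filter fun t : Fin (n - A.card) × Fin (n - A.card) × Fin (n - A.card) =>
          t.1 < t.2.1 ∧ t.2.1 < t.2.2 ∧ τ t.1 < τ t.2.2 ∧ τ t.2.2 < τ t.2.1 ∧
            ∀ a, t.1 < a → a < t.2.2 → ¬(τ t.2.1 < τ a)).image
            (fun t => (eR A t.1, eR A t.2.1, eR A t.2.2))) := by
    rw [Finset.disjoint_left]
    rintro p h1 h2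
    obtain ⟨⟨u, u', u''⟩, -, heq1⟩ := Finset.mem_image.mp h1
    obtain ⟨⟨v, v', v''⟩, -, heq2⟩ := Finset.mem_image.mp h2
    rw [← heq2, Prod.mk.injEq] at heq1
    exact eL_ne_eR u v heq1.1
  have d2 : Disjoint
      (((univ.filter fun t : Fin A.card × Fin A.card × Fin A.card =>
          t.1 < t.2.1 ∧ t.2.1 < t.2.2 ∧ σ t.1 < σ t.2.2 ∧ σ t.2.2 < σ t.2.1 ∧
            ∀ a, t.1 < a → a < t.2.2 → ¬(σ t.2.1 < σ a)).image
            (fun t => (eL A t.1, eL A t.2.1, eL A t.2.2))) ∪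
        ((univ.filter fun t : Fin (n - A.card) × Fin (n - A.card) × Fin (n - A.card) =>
          t.1 < t.2.1 ∧ t.2.1 < t.2.2 ∧ τ t.1 < τ t.2.2 ∧ τ t.2.2 < τ t.2.1 ∧
            ∀ a, t.1 < a → a < t.2.2 → ¬(τ t.2.1 < τ a)).image
            (fun t => (eR A t.1, eR A t.2.1, eR A t.2.2))))
      ((univ.filter fun p : Fin A.card × Fin (n - A.card) =>
          vL A (σ p.1) < vR A (τ p.2)).image
        (fun p => (eL A p.1, mid A, eR A p.2))) := by
    rw [Finset.disjoint_left]
    rintro p h12 h3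
    obtain ⟨⟨u0, v0⟩, -, heq3⟩ := Finset.mem_image.mp h3
    rcases Finset.mem_union.mp h12 with h1 | h2
    · obtain ⟨⟨u, u', u''⟩, -, heq1⟩ := Finset.mem_image.mp h1
      rw [← heq3, Prod.mk.injEq, Prod.mk.injEq] at heq1
      exact eL_ne_mid u' heq1.2.1
    · obtain ⟨⟨v, v', v''⟩, -, heq2⟩ := Finset.mem_image.mp h2
      rw [← heq3, Prod.mk.injEq, Prod.mk.injEq] at heq2
      exact mid_ne_eR v' heq2.2.1.symm
  rw [T1, main, Finset.card_union_of_disjoint d2, Finset.card_union_of_disjoint d1,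
    Finset.card_image_of_injective _ (tripleMap_inj eL_injective),
    Finset.card_image_of_injective _ (tripleMap_inj eR_injective),
    Finset.card_image_of_injective _ crossMap_inj]
  rfl

lemma T2_Phi : T2 (Phi ⟨A, σ, τ⟩) = T2 σ + T2 τ +
    (univ.filter fun p : Fin A.card × Fin (n - A.card) =>
      vR A (τ p.2) < vL A (σ p.1)).card := by
  classical
  set π := Phi ⟨A, σ, τ⟩ with hπdef
  have hL : ∀ u, π (eL A u) = vL A (σ u) := fun u => bfun_eL u
  have hM : π (mid A) = Fin.last n := bfun_mid
  have hR : ∀ v, π (eR A v) = vR A (τ v) := fun v => bfun_eR v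
  have main : (univ.filter fun t : Fin (n + 1) × Fin (n + 1) × Fin (n + 1) =>
      t.1 < t.2.1 ∧ t.2.1 < t.2.2 ∧ π t.2.2 < π t.1 ∧ π t.1 < π t.2.1 ∧
        ∀ a, t.1 < a → a < t.2.2 → ¬(π t.2.1 < π a)) =
      ((univ.filter fun t : Fin A.card × Fin A.card × Fin A.card =>
          t.1 < t.2.1 ∧ t.2.1 < t.2.2 ∧ σ t.2.2 < σ t.1 ∧ σ t.1 < σ t.2.1 ∧
            ∀ a, t.1 < a → a < t.2.2 → ¬(σ t.2.1 < σ a)).image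
            (fun t => (eL A t.1, eL A t.2.1, eL A t.2.2)) ∪
        (univ.filter fun t : Fin (n - A.card) × Fin (n - A.card) × Fin (n - A.card) =>
          t.1 < t.2.1 ∧ t.2.1 < t.2.2 ∧ τ t.2.2 < τ t.1 ∧ τ t.1 < τ t.2.1 ∧
            ∀ a, t.1 < a → a < t.2.2 → ¬(τ t.2.1 < τ a)).image
            (fun t => (eR A t.1, eR A t.2.1, eR A t.2.2))) ∪
      (univ.filter fun p : Fin A.card × Fin (n - A.card) =>
          vR A (τ p.2) < vL A (σ p.1)).image
        (fun p => (eL A p.1, mid A, eR A p.2)) := by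
    ext ⟨i, j, l⟩
    rw [Finset.mem_filter]
    simp only [Finset.mem_univ, true_and, Finset.mem_union]
    constructor
    · rintro ⟨h1, h2, h3, h4, h5⟩
      rcases pos_cases (A := A) i with ⟨u, rfl⟩ | rfl | ⟨v, rfl⟩ <;>
        rcases pos_cases (A := A) j with ⟨u', rfl⟩ | rfl | ⟨v', rfl⟩ <;>
        rcases pos_cases (A := A) l with ⟨u'', rfl⟩ | rfl | ⟨v'', rfl⟩
      -- i = eL u
      · refine Or.inl (Or.inl (Finset.mem_image.mpr ⟨(u, u', u''),
          Finset.mem_filter.mpr ⟨Finset.mem_univ _, h1, h2, ?_, ?_, ?_⟩, rfl⟩))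
        · have h3' := h3; rw [hL, hL] at h3'; exact vL_lt_vL.mp h3'
        · have h4' := h4; rw [hL, hL] at h4'; exact vL_lt_vL.mp h4'
        · intro w hw1 hw2 hcon
          exact h5 (eL A w) hw1 hw2 (by rw [hL, hL]; exact vL_lt_vL.mpr hcon)
      · exfalso
        rw [hM, hL] at h3
        exact absurd h3 (not_lt.mpr (le_of_lt (vL_lt_last (σ u))))
      · exfalso
        exact h5 (mid A) (eL_lt_mid u) (mid_lt_eR v'')
          (by rw [hL, hM]; exact vL_lt_last (σ u'))
      · exact absurd h2 (not_mid_lt_eL u'')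
      · exact absurd h2 (lt_irrefl _)
      · refine Or.inr (Finset.mem_image.mpr ⟨(u, v''),
          Finset.mem_filter.mpr ⟨Finset.mem_univ _, ?_⟩, rfl⟩)
        rw [hL, hR] at h3
        exact h3
      · exact absurd h2 (not_eR_lt_eL v' u'')
      · exact absurd h2 (not_eR_lt_mid v')
      · exfalso
        exact h5 (mid A) (eL_lt_mid u) (mid_lt_eR v'')
          (by rw [hR, hM]; exact vR_lt_last (τ v'))
      -- i = mid
      · exact absurd h1 (not_mid_lt_eL u')
      · exact absurd h1 (not_mid_lt_eL u')
      · exact absurd h1 (not_mid_lt_eL u')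
      · exact absurd h1 (lt_irrefl _)
      · exact absurd h1 (lt_irrefl _)
      · exact absurd h1 (lt_irrefl _)
      · exact absurd h2 (not_eR_lt_eL v' u'')
      · exact absurd h2 (not_eR_lt_mid v')
      · exfalso
        rw [hM, hR] at h4
        exact absurd h4 (not_lt.mpr (le_of_lt (vR_lt_last (τ v'))))
      -- i = eR v
      · exact absurd h1 (not_eR_lt_eL v u')
      · exact absurd h1 (not_eR_lt_eL v u')
      · exact absurd h1 (not_eR_lt_eL v u')
      · exact absurd h1 (not_eR_lt_mid v)
      · exact absurd h1 (not_eR_lt_mid v)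
      · exact absurd h1 (not_eR_lt_mid v)
      · exact absurd h2 (not_eR_lt_eL v' u'')
      · exact absurd h2 (not_eR_lt_mid v')
      · refine Or.inl (Or.inr (Finset.mem_image.mpr ⟨(v, v', v''),
          Finset.mem_filter.mpr ⟨Finset.mem_univ _, eR_lt_eR.mp h1, eR_lt_eR.mp h2,
            ?_, ?_, ?_⟩, rfl⟩))
        · have h3' := h3; rw [hR, hR] at h3'; exact vR_lt_vR.mp h3'
        · have h4' := h4; rw [hR, hR] at h4'; exact vR_lt_vR.mp h4'
        · intro w hw1 hw2 hcon
          exact h5 (eR A w) (eR_lt_eR.mpr hw1) (eR_lt_eR.mpr hw2)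
            (by rw [hR, hR]; exact vR_lt_vR.mpr hcon)
    · rintro ((h | h) | h)
      · obtain ⟨⟨u, u', u''⟩, hmem, heq⟩ := Finset.mem_image.mp h
        obtain ⟨-, h1, h2, h3, h4, h5⟩ := Finset.mem_filter.mp hmem
        rw [Prod.mk.injEq, Prod.mk.injEq] at heq
        obtain ⟨rfl, rfl, rfl⟩ := heq
        refine ⟨h1, h2, by rw [hL, hL]; exact vL_lt_vL.mpr h3,
          by rw [hL, hL]; exact vL_lt_vL.mpr h4, ?_⟩
        intro a ha1 ha2 hcon
        obtain ⟨w, rfl, hw1, hw2⟩ := between_eL ha1 ha2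
        rw [hL, hL] at hcon
        exact h5 w hw1 hw2 (vL_lt_vL.mp hcon)
      · obtain ⟨⟨v, v', v''⟩, hmem, heq⟩ := Finset.mem_image.mp h
        obtain ⟨-, h1, h2, h3, h4, h5⟩ := Finset.mem_filter.mp hmem
        rw [Prod.mk.injEq, Prod.mk.injEq] at heq
        obtain ⟨rfl, rfl, rfl⟩ := heq
        refine ⟨eR_lt_eR.mpr h1, eR_lt_eR.mpr h2, by rw [hR, hR]; exact vR_lt_vR.mpr h3,
          by rw [hR, hR]; exact vR_lt_vR.mpr h4, ?_⟩
        intro a ha1 ha2 hcon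
        obtain ⟨w, rfl, hw1, hw2⟩ := between_eR ha1 ha2
        rw [hR, hR] at hcon
        exact h5 w hw1 hw2 (vR_lt_vR.mp hcon)
      · obtain ⟨⟨u, v⟩, hmem, heq⟩ := Finset.mem_image.mp h
        obtain ⟨-, hcond⟩ := Finset.mem_filter.mp hmem
        rw [Prod.mk.injEq, Prod.mk.injEq] at heq
        obtain ⟨rfl, rfl, rfl⟩ := heq
        refine ⟨eL_lt_mid u, mid_lt_eR v, by rw [hL, hR]; exact hcond,
          by rw [hL, hM]; exact vL_lt_last _, ?_⟩
        intro a ha1 ha2 hcon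
        rw [hM] at hcon
        exact absurd hcon (not_lt.mpr (Fin.le_last _))
  have d1 : Disjoint
      ((univ.filter fun t : Fin A.card × Fin A.card × Fin A.card =>
          t.1 < t.2.1 ∧ t.2.1 < t.2.2 ∧ σ t.2.2 < σ t.1 ∧ σ t.1 < σ t.2.1 ∧
            ∀ a, t.1 < a → a < t.2.2 → ¬(σ t.2.1 < σ a)).image
            (fun t => (eL A t.1, eL A t.2.1, eL A t.2.2)))
      ((univ.filter fun t : Fin (n - A.card) × Fin (n - A.card) × Fin (n - A.card) =>
          t.1 < t.2.1 ∧ t.2.1 < t.2.2 ∧ τ t.2.2 < τ t.1 ∧ τ t.1 < τ t.2.1 ∧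
            ∀ a, t.1 < a → a < t.2.2 → ¬(τ t.2.1 < τ a)).image
            (fun t => (eR A t.1, eR A t.2.1, eR A t.2.2))) := by
    rw [Finset.disjoint_left]
    rintro p h1 h2
    obtain ⟨⟨u, u', u''⟩, -, heq1⟩ := Finset.mem_image.mp h1
    obtain ⟨⟨v, v', v''⟩, -, heq2⟩ := Finset.mem_image.mp h2
    rw [← heq2, Prod.mk.injEq] at heq1
    exact eL_ne_eR u v heq1.1
  have d2 : Disjoint
      (((univ.filter fun t : Fin A.card × Fin A.card × Fin A.card =>
          t.1 < t.2.1 ∧ t.2.1 < t.2.2 ∧ σ t.2.2 < σ t.1 ∧ σ t.1 < σ t.2.1 ∧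
            ∀ a, t.1 < a → a < t.2.2 → ¬(σ t.2.1 < σ a)).image
            (fun t => (eL A t.1, eL A t.2.1, eL A t.2.2))) ∪
        ((univ.filter fun t : Fin (n - A.card) × Fin (n - A.card) × Fin (n - A.card) =>
          t.1 < t.2.1 ∧ t.2.1 < t.2.2 ∧ τ t.2.2 < τ t.1 ∧ τ t.1 < τ t.2.1 ∧
            ∀ a, t.1 < a → a < t.2.2 → ¬(τ t.2.1 < τ a)).image
            (fun t => (eR A t.1, eR A t.2.1, eR A t.2.2))))
      ((univ.filter fun p : Fin A.card × Fin (n - A.card) =>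
          vR A (τ p.2) < vL A (σ p.1)).image
        (fun p => (eL A p.1, mid A, eR A p.2))) := by
    rw [Finset.disjoint_left]
    rintro p h12 h3
    obtain ⟨⟨u0, v0⟩, -, heq3⟩ := Finset.mem_image.mp h3
    rcases Finset.mem_union.mp h12 with h1 | h2
    · obtain ⟨⟨u, u', u''⟩, -, heq1⟩ := Finset.mem_image.mp h1
      rw [← heq3, Prod.mk.injEq, Prod.mk.injEq] at heq1
      exact eL_ne_mid u' heq1.2.1
    · obtain ⟨⟨v, v', v''⟩, -, heq2⟩ := Finset.mem_image.mp h2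
      rw [← heq3, Prod.mk.injEq, Prod.mk.injEq] at heq2
      exact mid_ne_eR v' heq2.2.1.symm
  rw [T2, main, Finset.card_union_of_disjoint d2, Finset.card_union_of_disjoint d1,
    Finset.card_image_of_injective _ (tripleMap_inj eL_injective),
    Finset.card_image_of_injective _ (tripleMap_inj eR_injective),
    Finset.card_image_of_injective _ crossMap_inj]
  rfl

lemma crossB_card : (univ.filter fun p : Fin A.card × Fin (n - A.card) =>
    vL A (σ p.1) < vR A (τ p.2)).card = gamB (univ : Finset (Fin n)) A := by
  classical
  unfold gamB
  apply Finset.card_bij (fun p _ =>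
    (A.orderEmbOfFin rfl (σ p.1), (Aᶜ).orderEmbOfFin (card_compl_eq A) (τ p.2)))
  · intro p hp
    have hcond := (Finset.mem_filter.mp hp).2
    refine Finset.mem_filter.mpr ⟨Finset.mem_product.mpr ⟨Finset.orderEmbOfFin_mem _ _ _,
      Finset.mem_sdiff.mpr ⟨Finset.mem_univ _,
        Finset.mem_compl.mp (Finset.orderEmbOfFin_mem _ _ _)⟩⟩, ?_⟩
    exact Fin.castSucc_lt_castSucc_iff.mp hcond
  · rintro ⟨a1, a2⟩ - ⟨b1, b2⟩ - h
    rw [Prod.mk.injEq] at h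
    have e1 : σ a1 = σ b1 := (A.orderEmbOfFin rfl).injective h.1
    have e2 : τ a2 = τ b2 := ((Aᶜ).orderEmbOfFin (card_compl_eq A)).injective h.2
    exact Prod.ext (σ.injective e1) (τ.injective e2)
  · rintro ⟨x, y⟩ hxy
    obtain ⟨hmem, hlt⟩ := Finset.mem_filter.mp hxy
    obtain ⟨hx, hy⟩ := Finset.mem_product.mp hmem
    have hx' : x ∈ Set.range (A.orderEmbOfFin rfl) := by
      rw [Finset.range_orderEmbOfFin]; exact hx
    have hy' : y ∈ Set.range ((Aᶜ).orderEmbOfFin (card_compl_eq A)) := by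
      rw [Finset.range_orderEmbOfFin]
      exact Finset.mem_coe.mpr (Finset.mem_compl.mpr (Finset.mem_sdiff.mp hy).2)
    obtain ⟨u, hu⟩ := hx'
    obtain ⟨v, hv⟩ := hy'
    refine ⟨(σ.symm u, τ.symm v), Finset.mem_filter.mpr ⟨Finset.mem_univ _, ?_⟩, ?_⟩
    · show vL A (σ (σ.symm u)) < vR A (τ (τ.symm v))
      rw [Equiv.apply_symm_apply, Equiv.apply_symm_apply]
      unfold vL vR
      rw [hu, hv]
      exact Fin.castSucc_lt_castSucc_iff.mpr hlt
    · show (A.orderEmbOfFin rfl (σ (σ.symm u)), _) = (x, y)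
      rw [Equiv.apply_symm_apply, Equiv.apply_symm_apply, hu, hv]

lemma crossA_card : (univ.filter fun p : Fin A.card × Fin (n - A.card) =>
    vR A (τ p.2) < vL A (σ p.1)).card = gamA (univ : Finset (Fin n)) A := by
  classical
  unfold gamA
  apply Finset.card_bij (fun p _ =>
    (A.orderEmbOfFin rfl (σ p.1), (Aᶜ).orderEmbOfFin (card_compl_eq A) (τ p.2)))
  · intro p hp
    have hcond := (Finset.mem_filter.mp hp).2
    refine Finset.mem_filter.mpr ⟨Finset.mem_product.mpr ⟨Finset.orderEmbOfFin_mem _ _ _,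
      Finset.mem_sdiff.mpr ⟨Finset.mem_univ _,
        Finset.mem_compl.mp (Finset.orderEmbOfFin_mem _ _ _)⟩⟩, ?_⟩
    exact Fin.castSucc_lt_castSucc_iff.mp hcond
  · rintro ⟨a1, a2⟩ - ⟨b1, b2⟩ - h
    rw [Prod.mk.injEq] at h
    have e1 : σ a1 = σ b1 := (A.orderEmbOfFin rfl).injective h.1
    have e2 : τ a2 = τ b2 := ((Aᶜ).orderEmbOfFin (card_compl_eq A)).injective h.2
    exact Prod.ext (σ.injective e1) (τ.injective e2)
  · rintro ⟨x, y⟩ hxy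
    obtain ⟨hmem, hlt⟩ := Finset.mem_filter.mp hxy
    obtain ⟨hx, hy⟩ := Finset.mem_product.mp hmem
    have hx' : x ∈ Set.range (A.orderEmbOfFin rfl) := by
      rw [Finset.range_orderEmbOfFin]; exact hx
    have hy' : y ∈ Set.range ((Aᶜ).orderEmbOfFin (card_compl_eq A)) := by
      rw [Finset.range_orderEmbOfFin]
      exact Finset.mem_coe.mpr (Finset.mem_compl.mpr (Finset.mem_sdiff.mp hy).2)
    obtain ⟨u, hu⟩ := hx'
    obtain ⟨v, hv⟩ := hy'
    refine ⟨(σ.symm u, τ.symm v), Finset.mem_filter.mpr ⟨Finset.mem_univ _, ?_⟩, ?_⟩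
    · show vR A (τ (τ.symm v)) < vL A (σ (σ.symm u))
      rw [Equiv.apply_symm_apply, Equiv.apply_symm_apply]
      unfold vL vR
      rw [hu, hv]
      exact Fin.castSucc_lt_castSucc_iff.mpr hlt
    · show (A.orderEmbOfFin rfl (σ (σ.symm u)), _) = (x, y)
      rw [Equiv.apply_symm_apply, Equiv.apply_symm_apply, hu, hv]

lemma vL_injective : Function.Injective (vL A) := by
  intro a b h
  unfold vL at h
  exact (A.orderEmbOfFin rfl).injective (Fin.castSucc_inj.mp h)

lemma vR_injective : Function.Injective (vR A) := by
  intro a b h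
  unfold vR at h
  exact ((Aᶜ).orderEmbOfFin (card_compl_eq A)).injective (Fin.castSucc_inj.mp h)

lemma bfun_eq_last_iff {i : Fin (n + 1)} : bfun A σ τ i = Fin.last n ↔ i = mid A := by
  constructor
  · intro h
    rcases pos_cases (A := A) i with ⟨u, rfl⟩ | rfl | ⟨v, rfl⟩
    · rw [bfun_eL] at h
      exact absurd h (ne_of_lt (vL_lt_last _))
    · rfl
    · rw [bfun_eR] at h
      exact absurd h (ne_of_lt (vR_lt_last _))
  · rintro rfl
    exact bfun_mid

lemma mem_iff_bfun (x : Fin n) :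
    x ∈ A ↔ ∃ i : Fin (n + 1), i.val < A.card ∧ bfun A σ τ i = Fin.castSucc x := by
  constructor
  · intro hx
    have hx' : x ∈ Set.range (A.orderEmbOfFin rfl) := by
      rw [Finset.range_orderEmbOfFin]; exact hx
    obtain ⟨u, hu⟩ := hx'
    refine ⟨eL A (σ.symm u), (σ.symm u).isLt, ?_⟩
    rw [bfun_eL, Equiv.apply_symm_apply]
    unfold vL
    rw [hu]
  · rintro ⟨i, hi, heq⟩
    have : i = eL A ⟨i.val, hi⟩ := Fin.ext rfl
    rw [this, bfun_eL] at heq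
    unfold vL at heq
    have := Fin.castSucc_inj.mp heq
    rw [← this]
    exact Finset.orderEmbOfFin_mem _ _ _

lemma Phi_injective : Function.Injective (Phi (n := n)) := by
  rintro ⟨A, σ, τ⟩ ⟨B, σ', τ'⟩ h
  have happ : ∀ i, bfun A σ τ i = bfun B σ' τ' i := fun i => by
    have := DFunLike.ext_iff.mp h i
    exact this
  have hmid : mid A = mid B := by
    have h1 : bfun B σ' τ' (mid A) = Fin.last n := by rw [← happ, bfun_mid]
    exact bfun_eq_last_iff.mp h1
  have hcard : A.card = B.card := congrArg Fin.val hmid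
  have hAB : A = B := by
    ext x
    rw [mem_iff_bfun (σ := σ) (τ := τ), mem_iff_bfun (σ := σ') (τ := τ')]
    constructor
    · rintro ⟨i, hi, heq⟩
      exact ⟨i, hcard ▸ hi, by rw [← happ]; exact heq⟩
    · rintro ⟨i, hi, heq⟩
      exact ⟨i, hcard ▸ hi, by rw [happ]; exact heq⟩
  subst hAB
  have hσ : σ = σ' := by
    apply Equiv.ext
    intro u
    have := happ (eL A u)
    rw [bfun_eL, bfun_eL] at this
    exact vL_injective this
  have hτ : τ = τ' := by
    apply Equiv.ext
    intro v
    have := happ (eR A v)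
    rw [bfun_eR, bfun_eR] at this
    exact vR_injective this
  rw [hσ, hτ]

lemma sigma_card : Fintype.card
    (Σ A : Finset (Fin n), Equiv.Perm (Fin A.card) × Equiv.Perm (Fin (n - A.card))) =
    Nat.factorial (n + 1) := by
  classical
  rw [Fintype.card_sigma]
  have step : ∀ A : Finset (Fin n),
      Fintype.card (Equiv.Perm (Fin A.card) × Equiv.Perm (Fin (n - A.card))) =
        Nat.factorial A.card * Nat.factorial (n - A.card) := fun A => by
    rw [Fintype.card_prod, Fintype.card_perm, Fintype.card_perm, Fintype.card_fin,
      Fintype.card_fin]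
  rw [Finset.sum_congr rfl (fun A _ => step A)]
  rw [← Finset.powerset_univ, Finset.sum_powerset]
  have inner : ∀ k ∈ range ((univ : Finset (Fin n)).card + 1),
      ∑ A ∈ powersetCard k (univ : Finset (Fin n)),
        Nat.factorial A.card * Nat.factorial (n - A.card) = Nat.factorial n := by
    intro k hk
    rw [Finset.mem_range, Finset.card_univ, Fintype.card_fin] at hk
    have hkn : k ≤ n := by omega
    have : ∀ A ∈ powersetCard k (univ : Finset (Fin n)),
        Nat.factorial A.card * Nat.factorial (n - A.card) =
          Nat.factorial k * Nat.factorial (n - k) := by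
      intro A hA
      rw [(Finset.mem_powersetCard.mp hA).2]
    rw [Finset.sum_congr rfl this, Finset.sum_const, Finset.card_powersetCard,
      Finset.card_univ, Fintype.card_fin, smul_eq_mul, ← mul_assoc,
      Nat.choose_mul_factorial_mul_factorial hkn]
  rw [Finset.sum_congr rfl inner, Finset.sum_const, Finset.card_range, Finset.card_univ,
    Fintype.card_fin, smul_eq_mul, Nat.factorial_succ]

lemma Phi_bijective : Function.Bijective (Phi (n := n)) :=
  (Fintype.bijective_iff_injective_and_card _).mpr
    ⟨Phi_injective, by rw [sigma_card, Fintype.card_perm, Fintype.card_fin]⟩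

end Statistics


theorem Fgen_recursion (p₁ p₂ q₁ q₂ : F)
    (hq : ∀ m : ℕ, 1 ≤ m → qint q₁ q₂ m ≠ 0) (n : ℕ) :
    Fgen p₁ p₂ q₁ q₂ (n + 1) =
      ∑ k ∈ range (n + 1),
        qbin q₁ q₂ n k * p₁ ^ k * p₂ ^ (n - k) *
          Fgen p₁ p₂ q₁ q₂ k * Fgen p₁ p₂ q₁ q₂ (n - k) := by
  classical
  have key : ∀ (A : Finset (Fin n)) (σ : Equiv.Perm (Fin A.card))
      (τ : Equiv.Perm (Fin (n - A.card))),
      p₁ ^ S1 (Phi ⟨A, σ, τ⟩) * p₂ ^ S2 (Phi ⟨A, σ, τ⟩) *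
        q₁ ^ T1 (Phi ⟨A, σ, τ⟩) * q₂ ^ T2 (Phi ⟨A, σ, τ⟩)
      = (q₁ ^ gamB (univ : Finset (Fin n)) A * q₂ ^ gamA (univ : Finset (Fin n)) A) *
        ((p₁ ^ A.card * p₂ ^ (n - A.card)) *
        ((p₁ ^ S1 σ * p₂ ^ S2 σ * q₁ ^ T1 σ * q₂ ^ T2 σ) *
        (p₁ ^ S1 τ * p₂ ^ S2 τ * q₁ ^ T1 τ * q₂ ^ T2 τ))) := by
    intro A σ τ
    rw [S1_Phi, S2_Phi, T1_Phi, T2_Phi, crossB_card, crossA_card,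
      pow_add, pow_add, pow_add, pow_add, pow_add, pow_add, pow_add, pow_add]
    ring
  have step2 : Fgen p₁ p₂ q₁ q₂ (n + 1) = ∑ A : Finset (Fin n),
      (q₁ ^ gamB (univ : Finset (Fin n)) A * q₂ ^ gamA (univ : Finset (Fin n)) A) *
      ((p₁ ^ A.card * p₂ ^ (n - A.card)) *
        (Fgen p₁ p₂ q₁ q₂ A.card * Fgen p₁ p₂ q₁ q₂ (n - A.card))) := by
    rw [Fgen]
    rw [← Fintype.sum_bijective (Phi (n := n)) Phi_bijective
      (fun x => p₁ ^ S1 (Phi x) * p₂ ^ S2 (Phi x) * q₁ ^ T1 (Phi x) * q₂ ^ T2 (Phi x))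
      (fun π => p₁ ^ S1 π * p₂ ^ S2 π * q₁ ^ T1 π * q₂ ^ T2 π)
      (fun x => rfl)]
    refine Eq.trans (Finset.sum_sigma univ (fun _ => univ) _) ?_
    refine Finset.sum_congr rfl fun A _ => ?_
    rw [Fintype.sum_prod_type]
    simp only [Fgen]
    rw [Finset.sum_mul_sum]
    simp only [Finset.mul_sum]
    exact Finset.sum_congr rfl fun σ _ => Finset.sum_congr rfl fun τ _ => key A σ τ
  rw [step2, ← Finset.powerset_univ, Finset.sum_powerset]
  have hcu : (univ : Finset (Fin n)).card = n := by
    rw [Finset.card_univ, Fintype.card_fin]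
  rw [hcu]
  refine Finset.sum_congr rfl fun k hk => ?_
  have hkn : k ≤ n := by
    rw [Finset.mem_range] at hk; omega
  have hsum : ∑ A ∈ powersetCard k (univ : Finset (Fin n)),
      (q₁ ^ gamB (univ : Finset (Fin n)) A * q₂ ^ gamA (univ : Finset (Fin n)) A) *
      ((p₁ ^ A.card * p₂ ^ (n - A.card)) *
        (Fgen p₁ p₂ q₁ q₂ A.card * Fgen p₁ p₂ q₁ q₂ (n - A.card))) =
      Gsum q₁ q₂ (univ : Finset (Fin n)) k *
        ((p₁ ^ k * p₂ ^ (n - k)) * (Fgen p₁ p₂ q₁ q₂ k * Fgen p₁ p₂ q₁ q₂ (n - k))) := by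
    rw [Gsum, Finset.sum_mul]
    refine Finset.sum_congr rfl fun A hA => ?_
    rw [(Finset.mem_powersetCard.mp hA).2]
  rw [hsum, Gsum_eq_qbin q₁ q₂ hq n (univ : Finset (Fin n)) hcu k hkn]
  ring
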